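/- Let K be a shifted k-family and K' a shifted (k−1)-family on ground set [1,n]. Then: (1) d_1(K,K') = |K/1| − |K'−1|; and (2) for every λ > 1, d_λ(K,K') = d_λ(K−1, K'−1) + d_λ(K/1, K'/1). -/

import Mathlib

open Finset

/-- Componentwise domination on finsets of naturals. -/
def domP (F G : Finset ℕ) : Prop :=
  List.Forall₂ (· ≤ ·) (F.sort (· ≤ ·)) (G.sort (· ≤ ·))

/-- Shifted with respect to the ordered ground set `A`. -/
def ShiftedOn (A : Finset ℕ) (K : Finset (Finset ℕ)) : Prop :=
  ∀ G ∈ K, ∀ F ⊆ A, domP F G → F ∈ K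

/-- The unsigned boundary of a family. -/
def ubd (K : Finset (Finset ℕ)) : Finset (Finset ℕ) :=
  K.biUnion fun F => F.image fun x => F.erase x

/-- The degree of a vertex `l` in the family pair `(K,K')`. -/
def pairDeg (K K' : Finset (Finset ℕ)) (l : ℕ) : ℕ :=
  (K.filter (fun F => l ∈ F ∧ F.erase l ∉ K')).card

/-- Deletion of a vertex from a family. -/
def famDel (K : Finset (Finset ℕ)) (e : ℕ) : Finset (Finset ℕ) :=
  K.filter fun F => e ∉ F

/-- Contraction of a vertex in a family. -/
def famCon (K : Finset (Finset ℕ)) (e : ℕ) : Finset (Finset ℕ) :=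
  (K.filter fun F => e ∈ F).image fun F => F.erase e

/-- sorting a subset gives a sublist. -/
lemma sort_sublist_insert {G : Finset ℕ} {x : ℕ} (hx : x ∉ G) :
    (G.sort (· ≤ ·)).Sublist ((insert x G).sort (· ≤ ·)) := by
  have h : ((insert x G).sort (· ≤ ·)).filter (fun y => y ≠ x) = G.sort (· ≤ ·) := by
    refine (fun hp h1 h2 => List.Perm.eq_of_pairwise' (r := (· ≤ ·)) h1 h2 hp) ?_ ?_ ?_
    · rw [← Multiset.coe_eq_coe, ← Multiset.filter_coe, Finset.sort_eq, Finset.sort_eq,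
        Finset.insert_val_of_notMem hx, Multiset.filter_cons_of_neg _ (by simp)]
      exact Multiset.filter_eq_self.mpr (fun a ha h => hx (h ▸ ha))
    · exact List.Pairwise.filter _ (Finset.pairwise_sort _ _)
    · exact Finset.pairwise_sort _ _
  rw [← h]
  exact List.filter_sublist

/-- a sublist of a sorted list with one more element is dominated by the tail. -/
lemma forall₂_tail_of_sublist : ∀ {l m : List ℕ}, l.Sublist m →
    m.Pairwise (· ≤ ·) → m.length = l.length + 1 →
    List.Forall₂ (· ≤ ·) l m.tail := by
  intro l m h
  induction h with
  | slnil => intro _ h; simp at h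
  | @cons l₁ m₁ a h ih =>
    intro hp hl
    have hlen : l₁.length = m₁.length := by simpa using hl.symm
    have heq : l₁ = m₁ := h.eq_of_length hlen
    subst heq
    simpa using List.forall₂_same.mpr (fun x _ => le_refl x)
  | @cons_cons l₁ m₁ a h ih =>
    intro hp hl
    have hm : m₁.length = l₁.length + 1 := by simpa using hl
    match m₁, hm with
    | c :: m'', hm =>
      have ih' := ih (hp.sublist (List.sublist_cons_self _ _)) hm
      simp only [List.tail_cons] at ih' ⊢
      exact List.Forall₂.cons ((List.pairwise_cons.mp hp).1 c (by simp)) ih'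

/-- inserting `1` is dominated by inserting any element of the ground set. -/
lemma domP_insert_one {n x : ℕ} {G : Finset ℕ} (hG : G ⊆ Finset.Icc 1 n)
    (hx : x ∈ Finset.Icc 1 n) (h1 : 1 ∉ G) (hxG : x ∉ G) :
    domP (insert 1 G) (insert x G) := by
  unfold domP
  rw [Finset.sort_insert _ (fun b hb => (Finset.mem_Icc.mp (hG hb)).1) h1]
  have hsub := sort_sublist_insert (G := G) (x := x) hxG
  have hlen : ((insert x G).sort (· ≤ ·)).length = (G.sort (· ≤ ·)).length + 1 := by
    rw [Finset.length_sort, Finset.length_sort, Finset.card_insert_of_notMem hxG]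
  match hm : (insert x G).sort (· ≤ ·), hlen with
  | c :: m, hlen =>
    have hc : c ∈ insert x G := by
      rw [← Finset.mem_sort (· ≤ ·), hm]; simp
    have hc1 : 1 ≤ c := by
      rcases Finset.mem_insert.mp hc with rfl | hcG
      · exact (Finset.mem_Icc.mp hx).1
      · exact (Finset.mem_Icc.mp (hG hcG)).1
    refine List.Forall₂.cons hc1 ?_
    have htail := forall₂_tail_of_sublist (hm ▸ hsub) (hm ▸ Finset.pairwise_sort _ _) hlen
    simpa using htail

/-- Key closure lemma: if `G ∈ ∂K`, `1 ∉ G`, then `insert 1 G ∈ K` for shifted `K`. -/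
lemma insert_one_mem {n : ℕ} {K : Finset (Finset ℕ)} (hKA : ∀ F ∈ K, F ⊆ Finset.Icc 1 n)
    (hK : ShiftedOn (Finset.Icc 1 n) K) {G : Finset ℕ} (hG : G ∈ ubd K) (h1 : 1 ∉ G) :
    insert 1 G ∈ K := by
  simp only [ubd, Finset.mem_biUnion, Finset.mem_image] at hG
  obtain ⟨F, hF, x, hxF, rfl⟩ := hG
  by_cases hx1 : x = 1
  · subst hx1
    rw [Finset.insert_erase hxF]; exact hF
  · have h1e : 1 ∉ F.erase x := h1
    have hGsub : F.erase x ⊆ Finset.Icc 1 n := (Finset.erase_subset _ _).trans (hKA F hF)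
    have hxmem : x ∈ Finset.Icc 1 n := hKA F hF hxF
    have h1n : (1 : ℕ) ∈ Finset.Icc 1 n := by
      rw [Finset.mem_Icc] at hxmem ⊢; omega
    have hdom := domP_insert_one hGsub hxmem h1e (Finset.notMem_erase x F)
    rw [Finset.insert_erase hxF] at hdom
    exact hK F hF _ (Finset.insert_subset h1n hGsub) hdom

lemma erase_erase_mem_famCon {K' : Finset (Finset ℕ)} {F : Finset ℕ} {l : ℕ}
    (hl : l ≠ 1) (h1 : 1 ∈ F) :
    (F.erase 1).erase l ∈ famCon K' 1 ↔ F.erase l ∈ K' := by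
  have h1l : 1 ∈ F.erase l := Finset.mem_erase.mpr ⟨fun h => hl h.symm, h1⟩
  constructor
  · intro h
    simp only [famCon, Finset.mem_image, Finset.mem_filter] at h
    obtain ⟨G, ⟨hGK, hG1⟩, hGe⟩ := h
    have : G = F.erase l := by
      rw [← Finset.insert_erase hG1, hGe, Finset.erase_right_comm, Finset.insert_erase h1l]
    rwa [this] at hGK
  · intro h
    simp only [famCon, Finset.mem_image, Finset.mem_filter]
    exact ⟨F.erase l, ⟨h, h1l⟩, Finset.erase_right_comm⟩

/-- **Recursion for degrees of a shifted family pair.**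
Let `K` be a shifted `k`-family and `K'` a shifted `(k−1)`-family on `[1,n]`
with `K' ⊆ ∂K`.  Then (1) `d_1(K,K') = |K/1| − |K'−1|`, and
(2) for every `λ > 1`, `d_λ(K,K') = d_λ(K−1,K'−1) + d_λ(K/1,K'/1)`. -/
theorem pairDeg_recursion (n k : ℕ) (K K' : Finset (Finset ℕ))
    (hKA : ∀ F ∈ K, F ⊆ Finset.Icc 1 n) (hK'A : ∀ F ∈ K', F ⊆ Finset.Icc 1 n)
    (hKk : ∀ F ∈ K, F.card = k) (hK'k : ∀ F ∈ K', F.card = k - 1)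
    (hK : ShiftedOn (Finset.Icc 1 n) K) (hK' : ShiftedOn (Finset.Icc 1 n) K')
    (hKK' : K' ⊆ ubd K) :
    ((pairDeg K K' 1 : ℤ) =
        ((famCon K 1).card : ℤ) - ((famDel K' 1).card : ℤ)) ∧
    (∀ l : ℕ, 1 < l →
      pairDeg K K' l =
        pairDeg (famDel K 1) (famDel K' 1) l +
        pairDeg (famCon K 1) (famCon K' 1) l) := by
  constructor
  · -- part (1)
    set T := K.filter (fun F => 1 ∈ F) with hT
    have hinj : Set.InjOn (fun F : Finset ℕ => F.erase 1) ↑T := by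
      intro F hF F' hF' h
      simp only [hT, Finset.coe_filter, Set.mem_setOf_eq] at hF hF'
      rw [← Finset.insert_erase hF.2, ← Finset.insert_erase hF'.2]
      simp only at h
      rw [h]
    have hcon : (famCon K 1).card = T.card := Finset.card_image_of_injOn hinj
    have hA : (T.filter (fun F => F.erase 1 ∈ K')).card = (famDel K' 1).card := by
      apply Finset.card_bij (fun F _ => F.erase 1)
      · intro F hF
        simp only [hT, Finset.mem_filter, Finset.filter_filter] at hF
        simp only [famDel, Finset.mem_filter]
        exact ⟨hF.2.2, Finset.notMem_erase _ _⟩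
      · intro F hF F' hF' h
        simp only [hT, Finset.mem_filter, Finset.filter_filter] at hF hF'
        rw [← Finset.insert_erase hF.2.1, ← Finset.insert_erase hF'.2.1, h]
      · intro G hG
        simp only [famDel, Finset.mem_filter] at hG
        refine ⟨insert 1 G, ?_, Finset.erase_insert hG.2⟩
        simp only [hT, Finset.mem_filter, Finset.filter_filter]
        exact ⟨insert_one_mem hKA hK (hKK' hG.1) hG.2, Finset.mem_insert_self _ _,
          by rw [Finset.erase_insert hG.2]; exact hG.1⟩
    have hsum : (T.filter (fun F => F.erase 1 ∈ K')).card +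
        (T.filter (fun F => ¬ F.erase 1 ∈ K')).card = T.card :=
      Finset.card_filter_add_card_filter_not _
    have hdeg : pairDeg K K' 1 = (T.filter (fun F => ¬ F.erase 1 ∈ K')).card := by
      unfold pairDeg
      rw [hT, Finset.filter_filter]
    rw [hdeg, hcon, ← hA]
    omega
  · -- part (2)
    intro l hl
    have hl1 : l ≠ 1 := by omega
    set S := K.filter (fun F => l ∈ F ∧ F.erase l ∉ K') with hS
    have hsplit : (S.filter (fun F => 1 ∉ F)).card + (S.filter (fun F => ¬ 1 ∉ F)).card
        = S.card := Finset.card_filter_add_card_filter_not _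
    have hdel : S.filter (fun F => 1 ∉ F)
        = (famDel K 1).filter (fun F => l ∈ F ∧ F.erase l ∉ famDel K' 1) := by
      ext F
      simp only [hS, famDel, Finset.mem_filter]
      constructor
      · rintro ⟨⟨hFK, hlF, hne⟩, h1F⟩
        exact ⟨⟨hFK, h1F⟩, hlF, fun h => hne h.1⟩
      · rintro ⟨⟨hFK, h1F⟩, hlF, hne⟩
        exact ⟨⟨hFK, hlF, fun h =>
          hne ⟨h, fun hc => h1F (Finset.mem_of_mem_erase hc)⟩⟩, h1F⟩
    have hcon : (S.filter (fun F => ¬ 1 ∉ F)).card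
        = pairDeg (famCon K 1) (famCon K' 1) l := by
      unfold pairDeg
      apply Finset.card_bij (fun F _ => F.erase 1)
      · intro F hF
        simp only [hS, Finset.mem_filter, not_not] at hF
        obtain ⟨⟨hFK, hlF, hne⟩, h1F⟩ := hF
        simp only [Finset.mem_filter]
        refine ⟨?_, Finset.mem_erase.mpr ⟨hl1, hlF⟩, ?_⟩
        · simp only [famCon, Finset.mem_image, Finset.mem_filter]
          exact ⟨F, ⟨hFK, h1F⟩, rfl⟩
        · rw [erase_erase_mem_famCon hl1 h1F]
          exact hne
      · intro F hF F' hF' h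
        simp only [hS, Finset.mem_filter, not_not] at hF hF'
        rw [← Finset.insert_erase hF.2, ← Finset.insert_erase hF'.2, h]
      · intro H hH
        simp only [Finset.mem_filter] at hH
        obtain ⟨hHc, hlH, hne⟩ := hH
        simp only [famCon, Finset.mem_image, Finset.mem_filter] at hHc
        obtain ⟨F, ⟨hFK, h1F⟩, rfl⟩ := hHc
        refine ⟨F, ?_, rfl⟩
        simp only [hS, Finset.mem_filter, not_not]
        refine ⟨⟨hFK, Finset.mem_of_mem_erase hlH, fun h => ?_⟩, h1F⟩
        exact hne ((erase_erase_mem_famCon hl1 h1F).mpr h)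
    rw [show pairDeg K K' l = S.card from rfl, ← hsplit, hcon,
      show pairDeg (famDel K 1) (famDel K' 1) l = ((famDel K 1).filter
        (fun F => l ∈ F ∧ F.erase l ∉ famDel K' 1)).card from rfl, ← hdel]
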